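/- For every natural number n ≥ 1 and every real s ≥ 0, the quantity B(n,s) := ∑_{k=1}^{n} (1/n)·(1 − k/n)^s satisfies B(n,s) ≥ (1/(s+1))·(1 − 1/n)^{s+1}. -/

import Mathlib

open Real Finset

lemma key_rpow (s : ℝ) (hs : 0 ≤ s) {a b : ℝ} (hb : 0 ≤ b) (hba : b ≤ a) :
    a ^ (s + 1) - b ^ (s + 1) ≤ (s + 1) * a ^ s * (a - b) := by
  have ha : 0 ≤ a := hb.trans hba
  rcases ha.eq_or_lt with h | h
  · have hb0 : b = 0 := le_antisymm (h ▸ hba) hb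
    rw [← h, hb0, Real.zero_rpow (by positivity)]
    simp
  · -- a > 0
    have ht : (-1 : ℝ) ≤ b / a - 1 := by
      have : 0 ≤ b / a := div_nonneg hb h.le
      linarith
    have hp : (1 : ℝ) ≤ s + 1 := by linarith
    have hber := one_add_mul_self_le_rpow_one_add ht hp
    rw [add_sub_cancel] at hber
    -- hber : 1 + (s+1)*(b/a - 1) ≤ (b/a)^(s+1)
    have hmul := mul_le_mul_of_nonneg_left hber (le_of_lt (Real.rpow_pos_of_pos h (s+1)))
    rw [Real.div_rpow hb h.le] at hmul
    have hane : a ^ (s+1) ≠ 0 := ne_of_gt (Real.rpow_pos_of_pos h (s+1))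
    rw [mul_div_cancel₀ _ hane] at hmul
    -- hmul : a^(s+1) * (1 + (s+1)*(b/a - 1)) ≤ b^(s+1)
    have hsplit : a ^ (s + 1) = a ^ s * a := by
      rw [Real.rpow_add h, Real.rpow_one]
    have hab : a ^ (s + 1) * (b / a) = a ^ s * b := by
      rw [hsplit]; field_simp
    nlinarith [hmul, hsplit, hab]

theorem stmt_1 (n : ℕ) (hn : 1 ≤ n) (s : ℝ) (hs : 0 ≤ s) :
    ∑ k ∈ Finset.Icc 1 n, (1 / (n : ℝ)) * (1 - (k : ℝ) / n) ^ s ≥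
      (1 / (s + 1)) * (1 - 1 / (n : ℝ)) ^ (s + 1) := by
  have hn0 : (0 : ℝ) < n := by exact_mod_cast hn
  have hs1 : (0 : ℝ) < s + 1 := by linarith
  set g : ℕ → ℝ := fun k => (1 / (s + 1)) * (max 0 (1 - (k : ℝ) / n)) ^ (s + 1) with hg
  have hstep : ∀ k ∈ Finset.Icc 1 n,
      g k - g (k + 1) ≤ (1 / (n : ℝ)) * (1 - (k : ℝ) / n) ^ s := by
    intro k hk
    simp only [Finset.mem_Icc] at hk
    have hkn : (k : ℝ) ≤ n := by exact_mod_cast hk.2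
    have ha : (0:ℝ) ≤ 1 - (k : ℝ) / n := by
      rw [sub_nonneg]; exact div_le_one_of_le₀ hkn hn0.le
    set a : ℝ := 1 - (k : ℝ) / n
    set b : ℝ := max 0 (1 - ((k : ℝ) + 1) / n)
    have hb : 0 ≤ b := le_max_left _ _
    have hba : b ≤ a := by
      apply max_le ha
      have h1 : ((k:ℝ)) / n ≤ ((k:ℝ)+1)/n := by gcongr <;> linarith
      show 1 - ((k:ℝ)+1)/n ≤ 1 - (k:ℝ)/n
      linarith
    have hdiff : a - b ≤ 1 / (n : ℝ) := by
      rcases le_or_gt (1 - ((k : ℝ) + 1) / n) 0 with h | h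
      · have hbb : b = 0 := max_eq_left h
        rw [hbb, sub_zero]
        have h2 : (n : ℝ) ≤ (k : ℝ) + 1 := by
          rw [sub_nonpos, one_le_div hn0] at h; exact h
        show 1 - (k:ℝ)/n ≤ 1/n
        rw [sub_le_iff_le_add, ← add_div, le_div_iff₀ hn0]
        linarith
      · have hbb : b = 1 - ((k : ℝ) + 1) / n := max_eq_right h.le
        rw [hbb]
        have heq : a - (1 - ((k : ℝ) + 1) / n) = 1 / n := by
          show (1 - (k:ℝ)/n) - (1 - ((k:ℝ)+1)/n) = 1/n
          field_simp
          ring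
        exact le_of_eq heq
    have hkey := key_rpow s hs hb hba
    have hmax : max 0 a = a := max_eq_right ha
    have : g k - g (k + 1) = (1 / (s + 1)) * (a ^ (s + 1) - b ^ (s + 1)) := by
      simp only [hg, Nat.cast_add, Nat.cast_one]
      rw [hmax]; ring
    rw [this]
    calc (1 / (s + 1)) * (a ^ (s + 1) - b ^ (s + 1))
        ≤ (1 / (s + 1)) * ((s + 1) * a ^ s * (a - b)) := by
          apply mul_le_mul_of_nonneg_left hkey (by positivity)
      _ = a ^ s * (a - b) := by field_simp
      _ ≤ a ^ s * (1 / n) := by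
          apply mul_le_mul_of_nonneg_left hdiff (Real.rpow_nonneg ha s)
      _ = (1 / (n : ℝ)) * a ^ s := by ring
  have htel : ∀ m : ℕ, ∑ k ∈ Finset.Icc 1 m, (g k - g (k + 1)) = g 1 - g (m + 1) := by
    intro m
    induction m with
    | zero => simp
    | succ m ih =>
      rw [Finset.sum_Icc_succ_top (by omega : 1 ≤ m + 1), ih]
      ring
  have hg1 : g 1 = (1 / (s + 1)) * (1 - 1 / (n : ℝ)) ^ (s + 1) := by
    simp only [hg, Nat.cast_one]
    congr 2
    apply max_eq_right
    rw [sub_nonneg]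
    exact div_le_one_of_le₀ (by exact_mod_cast hn) hn0.le
  have hgn : g (n + 1) = 0 := by
    simp only [hg]
    have : max 0 (1 - ((n : ℝ) + 1) / n) = 0 := by
      apply max_eq_left
      rw [sub_nonpos]
      rw [le_div_iff₀ hn0]; linarith
    rw [Nat.cast_add, Nat.cast_one, this, Real.zero_rpow (by positivity), mul_zero]
  calc ∑ k ∈ Finset.Icc 1 n, (1 / (n : ℝ)) * (1 - (k : ℝ) / n) ^ s
      ≥ ∑ k ∈ Finset.Icc 1 n, (g k - g (k + 1)) := Finset.sum_le_sum hstep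
    _ = g 1 - g (n + 1) := htel n
    _ = (1 / (s + 1)) * (1 - 1 / (n : ℝ)) ^ (s + 1) := by rw [hg1, hgn, sub_zero]
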